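/- arXiv:2006.12916 — 2 statements merged into one kernel-verified Lean document; each statement's English description precedes it below -/
import Mathlib

section
/- Let Φ be an index map of exponential type-(b) and (X, E^{(b)}) the associated AI_b-graph with hyperbolic boundary (∂X, θ_a). Then the canonical map κ : ∂X → K to the attractor K is a well-defined bijection, and is a Hölder equivalence with exponent b/a: there is C ≥ 1 such that C^{-1} θ_a(ξ,η) ≤ ρ(κ(ξ),κ(η))^{a/b} ≤ C θ_a(ξ,η) for all ξ,η ∈ ∂X. -/
open SimpleGraph Metric
open scoped ENNReal ENat

noncomputable section

/-- A locally finite connected graph with a distinguished root. -/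
structure RootedGraph (X : Type*) where
  G : SimpleGraph X
  root : X
  conn : G.Connected
  locFin : ∀ x : X, {y | G.Adj x y}.Finite

namespace RootedGraph

variable {X : Type*} (R : RootedGraph X)

/-- The level `|x| = d(ϑ,x)` of a vertex. -/
def level (x : X) : ℕ := R.G.dist R.root x

/-- The horizontal subgraph: edges joining vertices of equal level. -/
def Gh : SimpleGraph X where
  Adj x y := R.G.Adj x y ∧ R.level x = R.level y
  symm := ⟨fun _ _ h => ⟨h.1.symm, h.2.symm⟩⟩
  loopless := ⟨fun x h => R.G.loopless.irrefl x h.1⟩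

/-- The horizontal distance `d_h`, valued in `ℕ∞`. -/
def dh (x y : X) : ℕ∞ := R.Gh.edist x y

/-- The `m`-th descendant set `J_m(x)`: vertices `y` with `|y| = |x| + m` lying
below `x` (i.e. `x` lies on a geodesic from the root to `y`). -/
def J (m : ℕ) (x : X) : Set X :=
  {y | R.level y = R.level x + m ∧ R.G.dist x y = m}

/-- `(m,k)`-departing property. -/
def Departing (m k : ℕ) : Prop :=
  ∀ x y : X, R.level x = R.level y → (k : ℕ∞) < R.dh x y →
    ∀ u ∈ R.J m x, ∀ v ∈ R.J m y, ((2 * k : ℕ) : ℕ∞) < R.dh u v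

/-- Expansive property. -/
def Expansive : Prop :=
  ∀ x y : X, R.level x = R.level y → (1 : ℕ∞) < R.dh x y →
    ∀ u ∈ R.J 1 x, ∀ v ∈ R.J 1 y, (1 : ℕ∞) < R.dh u v

/-- The Gromov product `(x|y)` with base point the root. -/
def gp (x y : X) : ℝ := ((R.level x : ℝ) + R.level y - R.G.dist x y) / 2

/-- Gromov hyperbolicity with respect to the root base point. -/
def Hyperbolic : Prop :=
  ∃ δ : ℝ, 0 ≤ δ ∧ ∀ x y z : X, min (R.gp x z) (R.gp z y) - δ ≤ R.gp x y

/-- A geodesic ray from the root. -/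
def IsRay (f : ℕ → X) : Prop := f 0 = R.root ∧ ∀ i, f (i + 1) ∈ R.J 1 (f i)

/-- The Gromov product of two rays: the (increasing) limit of `(x_i|y_i)`. -/
def gpRay (f g : ℕ → X) : ℝ≥0∞ := ⨆ i, ENNReal.ofReal (R.gp (f i) (g i))

/-- `|x ∨ y|_k = sup{ i : d_h(x_i,y_i) ≤ k }`. -/
def joinK (k : ℕ) (f g : ℕ → X) : ℝ≥0∞ :=
  ⨆ (i : ℕ) (_ : R.dh (f i) (g i) ≤ (k : ℕ∞)), (i : ℝ≥0∞)

/-- The Gromov product on a model `B` of the hyperbolic boundary, defined as the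
supremum over pairs of converging rays. -/
def gpB {B : Type*} (lim : (ℕ → X) → B) (ξ η : B) : ℝ≥0∞ :=
  ⨆ (f : ℕ → X) (g : ℕ → X)
    (_ : R.IsRay f ∧ R.IsRay g ∧ lim f = ξ ∧ lim g = η), R.gpRay f g

/-- `B` together with `lim` is a model of the hyperbolic boundary: every point is the
limit of a ray, and two rays have the same limit iff they are equivalent. -/
def BoundaryOf {B : Type*} (lim : (ℕ → X) → B) : Prop :=
  (∀ ξ : B, ∃ f, R.IsRay f ∧ lim f = ξ) ∧
    ∀ f g, R.IsRay f → R.IsRay g → (lim f = lim g ↔ R.gpRay f g = ⊤)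

/-- The metric on the boundary model is a Gromov metric:
`θ_a(ξ,η) ≍ e^{-a(ξ|η)}`. -/
def GromovLike {B : Type*} [MetricSpace B] (lim : (ℕ → X) → B) (a c₁ c₂ : ℝ) : Prop :=
  ∀ ξ η : B, ξ ≠ η →
    c₁ * Real.exp (-a * (R.gpB lim ξ η).toReal) ≤ dist ξ η ∧
      dist ξ η ≤ c₂ * Real.exp (-a * (R.gpB lim ξ η).toReal)

/-- The boundary cell `J_∂(x)`: boundary points reachable by rays through `x`. -/
def cell {B : Type*} (lim : (ℕ → X) → B) (x : X) : Set B :=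
  {ξ | ∃ f, R.IsRay f ∧ f (R.level x) = x ∧ lim f = ξ}

/-- The `k`-shadow `J^k_∂(x)`. -/
def shadow {B : Type*} (lim : (ℕ → X) → B) (k : ℕ) (x : X) : Set B :=
  ⋃ y ∈ {y | R.level y = R.level x ∧ R.dh x y ≤ (k : ℕ∞)}, R.cell lim y

/-- Bounded degree. -/
def BddDeg : Prop := ∃ D : ℕ, ∀ x : X, Set.ncard {y | R.G.Adj x y} ≤ D

/-- A vertical rooted graph: all edges join adjacent levels. -/
def Vertical : Prop :=
  ∀ x y : X, R.G.Adj x y → R.level x = R.level y + 1 ∨ R.level y = R.level x + 1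

/-- An index map on `(X,E_v)` over `M`. -/
def IsIndexMap {M : Type*} [MetricSpace M] (Φ : X → Set M) : Prop :=
  (∀ x, IsCompact (Φ x)) ∧ (∀ x, (Φ x).Nonempty) ∧
    (∀ x y, y ∈ R.J 1 x → Φ y ⊆ Φ x) ∧
    (∀ f, R.IsRay f → ∃ p, (⋂ i, Φ (f i)) = {p})

/-- The attractor of an index map. -/
def attractor {M : Type*} [MetricSpace M] (Φ : X → Set M) : Set M :=
  ⋂ n : ℕ, ⋃ x ∈ {x | R.level x = n}, Φ x

/-- Exponential type-(b): `diam Φ(x) ≤ δ₀ e^{-b|x|}`. -/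
def ExpType {M : Type*} [MetricSpace M] (Φ : X → Set M) (b δ₀ : ℝ) : Prop :=
  ∀ x, EMetric.diam (Φ x) ≤ ENNReal.ofReal (δ₀ * Real.exp (-b * R.level x))

/-- Condition `(S_b)`. -/
def CondS {M : Type*} [MetricSpace M] (Φ : X → Set M) (b : ℝ) : Prop :=
  ∀ c : ℝ, 0 < c → ∃ ℓ : ℕ, ∀ (n : ℕ) (F : Set M),
    EMetric.diam F < ENNReal.ofReal (c * Real.exp (-b * n)) →
      Set.ncard {x | R.level x = n ∧ ((Φ x ∩ R.attractor Φ) ∩ F).Nonempty} ≤ ℓ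

end RootedGraph

/-- Distance between two subsets of a metric space. -/
def setDist {M : Type*} [MetricSpace M] (s t : Set M) : ℝ :=
  sInf ((fun p : M × M => dist p.1 p.2) '' s ×ˢ t)

/-- The AI_b-graph on `X` associated to an index map `Φ`:
same root, same vertical edges, and horizontal edges between distinct equal-level
vertices whose index sets are `γe^{-bn}`-close. -/
def RootedGraph.IsAIb {X M : Type*} [MetricSpace M] (R R' : RootedGraph X)
    (Φ : X → Set M) (b γ : ℝ) : Prop :=
  R'.root = R.root ∧ ∀ x y : X, R'.G.Adj x y ↔
    (R.G.Adj x y ∨ (R.level x = R.level y ∧ x ≠ y ∧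
      setDist (Φ x) (Φ y) ≤ γ * Real.exp (-b * R.level x)))

/-- The AI_∞-graph on `X` associated to an index map `Φ`. -/
def RootedGraph.IsAIinf {X M : Type*} [MetricSpace M] (R R' : RootedGraph X)
    (Φ : X → Set M) : Prop :=
  R'.root = R.root ∧ ∀ x y : X, R'.G.Adj x y ↔
    (R.G.Adj x y ∨ (R.level x = R.level y ∧ x ≠ y ∧ (Φ x ∩ Φ y).Nonempty))

end


section AuxLemmas

open RootedGraph

variable {X : Type*} {M : Type*} [MetricSpace M]

lemma aux_level_root (R : RootedGraph X) : R.level R.root = 0 := by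
  simp [RootedGraph.level]

lemma aux_le_of_AIb {R R' : RootedGraph X} {Φ : X → Set M} {b γ : ℝ}
    (hA : R.IsAIb R' Φ b γ) : R.G ≤ R'.G := by
  intro x y h
  exact (hA.2 x y).mpr (Or.inl h)

lemma aux_dist'_le {R R' : RootedGraph X} (hle : R.G ≤ R'.G) (x y : X) :
    R'.G.dist x y ≤ R.G.dist x y := by
  obtain ⟨w, hw⟩ := R.conn.exists_walk_length_eq_dist x y
  calc R'.G.dist x y ≤ (w.mapLe hle).length := SimpleGraph.dist_le _
    _ = w.length := by simp [SimpleGraph.Walk.mapLe]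
    _ = R.G.dist x y := hw

lemma aux_adj_level {R R' : RootedGraph X} {Φ : X → Set M} {b γ : ℝ}
    (hvert : R.Vertical) (hA : R.IsAIb R' Φ b γ) {u v : X} (h : R'.G.Adj u v) :
    R.level u ≤ R.level v + 1 ∧ R.level v ≤ R.level u + 1 := by
  rcases (hA.2 u v).mp h with h' | h'
  · rcases hvert u v h' with h'' | h'' <;> omega
  · omega

lemma aux_walk_level {R : RootedGraph X} {G' : SimpleGraph X}
    (hadj : ∀ u v, G'.Adj u v → R.level u ≤ R.level v + 1 ∧ R.level v ≤ R.level u + 1)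
    {u v : X} (w : G'.Walk u v) : R.level v ≤ R.level u + w.length := by
  induction w with
  | nil => simp
  | @cons a c d h w ih =>
      have := hadj _ _ h
      simp only [SimpleGraph.Walk.length_cons]
      omega

lemma aux_level'_eq {R R' : RootedGraph X} {Φ : X → Set M} {b γ : ℝ}
    (hvert : R.Vertical) (hA : R.IsAIb R' Φ b γ) (x : X) :
    R'.level x = R.level x := by
  refine le_antisymm ?_ ?_
  · have := aux_dist'_le (aux_le_of_AIb hA) R.root x
    simpa [RootedGraph.level, hA.1] using this
  · obtain ⟨w, hw⟩ := R'.conn.exists_walk_length_eq_dist R'.root x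
    have := aux_walk_level (fun u v h => aux_adj_level hvert hA h) w
    have hroot : R.level R'.root = 0 := by rw [hA.1]; exact aux_level_root R
    rw [hroot, hw] at this
    simpa [RootedGraph.level] using this

lemma aux_ray_level {R : RootedGraph X} {f : ℕ → X} (hf : R.IsRay f) (i : ℕ) :
    R.level (f i) = i := by
  induction i with
  | zero => rw [hf.1]; exact aux_level_root R
  | succ n ih => have := (hf.2 n).1; omega

/-- a vertical edge up gives a `J 1` membership -/
lemma aux_J1_of_adj {R : RootedGraph X} {x y : X} (h : R.G.Adj x y)
    (hl : R.level y = R.level x + 1) : y ∈ R.J 1 x := by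
  refine ⟨hl, ?_⟩
  exact SimpleGraph.dist_eq_one_iff_adj.mpr h

lemma aux_ray'_to_ray {R R' : RootedGraph X} {Φ : X → Set M} {b γ : ℝ}
    (hvert : R.Vertical) (hA : R.IsAIb R' Φ b γ) {f : ℕ → X}
    (hf : R'.IsRay f) : R.IsRay f := by
  constructor
  · rw [hf.1, hA.1]
  · intro i
    have h1 := (hf.2 i).1
    have h2 := (hf.2 i).2
    have hadj : R'.G.Adj (f i) (f (i+1)) := SimpleGraph.dist_eq_one_iff_adj.mp h2
    have hlev : R.level (f (i+1)) = R.level (f i) + 1 := by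
      rw [← aux_level'_eq hvert hA, ← aux_level'_eq hvert hA]; exact h1
    rcases (hA.2 _ _).mp hadj with h' | h'
    · exact aux_J1_of_adj h' hlev
    · omega

lemma aux_ray_to_ray' {R R' : RootedGraph X} {Φ : X → Set M} {b γ : ℝ}
    (hvert : R.Vertical) (hA : R.IsAIb R' Φ b γ) {f : ℕ → X}
    (hf : R.IsRay f) : R'.IsRay f := by
  constructor
  · rw [hf.1, hA.1]
  · intro i
    have h1 := (hf.2 i).1
    have h2 := (hf.2 i).2
    have hadj : R.G.Adj (f i) (f (i+1)) := SimpleGraph.dist_eq_one_iff_adj.mp h2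
    refine ⟨?_, SimpleGraph.dist_eq_one_iff_adj.mpr (aux_le_of_AIb hA hadj)⟩
    rw [aux_level'_eq hvert hA, aux_level'_eq hvert hA]; exact h1


lemma aux_setDist_nonneg (s t : Set M) : 0 ≤ setDist s t := by
  apply Real.sInf_nonneg
  rintro r ⟨⟨p, q⟩, hpq, rfl⟩
  exact dist_nonneg

lemma aux_setDist_le_dist {s t : Set M} {p q : M} (hp : p ∈ s) (hq : q ∈ t) :
    setDist s t ≤ dist p q := by
  apply csInf_le
  · exact ⟨0, by rintro r ⟨⟨u, v⟩, huv, rfl⟩; exact dist_nonneg⟩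
  · exact ⟨(p, q), ⟨hp, hq⟩, rfl⟩

lemma aux_setDist_attained {s t : Set M} (hs : IsCompact s) (ht : IsCompact t)
    (hsn : s.Nonempty) (htn : t.Nonempty) :
    ∃ p ∈ s, ∃ q ∈ t, dist p q = setDist s t := by
  have hK : IsCompact (s ×ˢ t) := hs.prod ht
  have hcont : Continuous (fun p : M × M => dist p.1 p.2) := continuous_dist
  have himg : IsCompact ((fun p : M × M => dist p.1 p.2) '' (s ×ˢ t)) :=
    hK.image hcont
  have hne : ((fun p : M × M => dist p.1 p.2) '' (s ×ˢ t)).Nonempty :=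
    (hsn.prod htn).image _
  have := himg.sInf_mem hne
  obtain ⟨⟨p, q⟩, ⟨hp, hq⟩, heq⟩ := this
  exact ⟨p, hp, q, hq, heq⟩

lemma aux_diam_bound {R : RootedGraph X} {Φ : X → Set M} {b δ₀ : ℝ}
    (hδ₀ : 0 ≤ δ₀) (hexp : R.ExpType Φ b δ₀) {x : X} {p q : M}
    (hp : p ∈ Φ x) (hq : q ∈ Φ x) :
    dist p q ≤ δ₀ * Real.exp (-b * R.level x) := by
  have h1 : edist p q ≤ EMetric.diam (Φ x) := EMetric.edist_le_diam_of_mem hp hq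
  have h2 := (h1.trans (hexp x))
  have hr : (0:ℝ) ≤ δ₀ * Real.exp (-b * R.level x) :=
    mul_nonneg hδ₀ (Real.exp_pos _).le
  have := ENNReal.toReal_le_of_le_ofReal hr h2
  simpa [dist_edist] using this

/-- One step of the chain estimate along an `R'`-edge. -/
lemma aux_chain_step {R R' : RootedGraph X} {Φ : X → Set M} {b γ δ₀ : ℝ}
    (hvert : R.Vertical) (hΦ : R.IsIndexMap Φ) (hγ : 0 < γ) (hδ₀ : 0 ≤ δ₀)
    (hexp : R.ExpType Φ b δ₀) (hA : R.IsAIb R' Φ b γ)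
    {x v : X} (h : R'.G.Adj x v) {p : M} (hp : p ∈ Φ x) :
    ∃ r ∈ Φ v, dist p r ≤ (δ₀ + γ) * Real.exp (-b * R.level x) := by
  have hpos : (0:ℝ) < Real.exp (-b * R.level x) := Real.exp_pos _
  rcases (hA.2 x v).mp h with h' | h'
  · rcases hvert x v h' with hl | hl
    · -- level x = level v + 1 : Φ x ⊆ Φ v
      have hsub : Φ x ⊆ Φ v := hΦ.2.2.1 v x (aux_J1_of_adj h'.symm hl)
      exact ⟨p, hsub hp, by simpa using mul_nonneg (by linarith) hpos.le⟩
    · -- level v = level x + 1 : Φ v ⊆ Φ x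
      have hsub : Φ v ⊆ Φ x := hΦ.2.2.1 x v (aux_J1_of_adj h' hl)
      obtain ⟨r, hr⟩ := hΦ.2.1 v
      refine ⟨r, hr, ?_⟩
      have := aux_diam_bound hδ₀ hexp hp (hsub hr)
      nlinarith
  · -- horizontal edge
    obtain ⟨hlev, hne, hd⟩ := h'
    obtain ⟨p₀, hp₀, r, hr, heq⟩ :=
      aux_setDist_attained (hΦ.1 x) (hΦ.1 v) (hΦ.2.1 x) (hΦ.2.1 v)
    refine ⟨r, hr, ?_⟩
    have h1 : dist p p₀ ≤ δ₀ * Real.exp (-b * R.level x) :=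
      aux_diam_bound hδ₀ hexp hp hp₀
    have h2 : dist p₀ r ≤ γ * Real.exp (-b * R.level x) := heq ▸ hd
    calc dist p r ≤ dist p p₀ + dist p₀ r := dist_triangle _ _ _
      _ ≤ (δ₀ + γ) * Real.exp (-b * R.level x) := by rw [add_mul]; exact add_le_add h1 h2

/-- Walk estimate: summed form. -/
lemma aux_walk_sum {R R' : RootedGraph X} {Φ : X → Set M} {b γ δ₀ : ℝ}
    (hb : 0 < b) (hvert : R.Vertical) (hΦ : R.IsIndexMap Φ) (hγ : 0 < γ) (hδ₀ : 0 ≤ δ₀)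
    (hexp : R.ExpType Φ b δ₀) (hA : R.IsAIb R' Φ b γ) :
    ∀ {x y : X} (w : R'.G.Walk x y) {p q : M}, p ∈ Φ x → q ∈ Φ y →
    dist p q ≤ (δ₀ + γ) * ∑ t ∈ Finset.range (w.length + 1),
      Real.exp (-b * ((R.level x : ℝ) - t)) := by
  intro x y w
  induction w with
  | nil =>
      intro p q hp hq
      refine le_trans (aux_diam_bound hδ₀ hexp hp hq) ?_
      simp only [SimpleGraph.Walk.length_nil, zero_add, Finset.range_one,
        Finset.sum_singleton, Nat.cast_zero, sub_zero]
      exact mul_le_mul_of_nonneg_right (by linarith) (Real.exp_pos _).le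
  | @cons x v y h w ih =>
      intro p q hp hq
      obtain ⟨r, hr, hpr⟩ := aux_chain_step hvert hΦ hγ hδ₀ hexp hA h hp
      have hrq := ih hr hq
      have hlev : (R.level x : ℝ) ≤ (R.level v : ℝ) + 1 := by
        exact_mod_cast (aux_adj_level hvert hA h).1
      have hA0 : (0:ℝ) ≤ δ₀ + γ := by linarith
      calc dist p q ≤ dist p r + dist r q := dist_triangle _ _ _
        _ ≤ (δ₀ + γ) * Real.exp (-b * ((R.level x : ℝ) - 0)) +
            (δ₀ + γ) * ∑ t ∈ Finset.range (w.length + 1),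
              Real.exp (-b * ((R.level x : ℝ) - (t + 1))) := by
            have hsum : ∑ t ∈ Finset.range (w.length + 1),
                Real.exp (-b * ((R.level v : ℝ) - t)) ≤
                ∑ t ∈ Finset.range (w.length + 1),
                  Real.exp (-b * ((R.level x : ℝ) - (t + 1))) := by
              apply Finset.sum_le_sum
              intro t _
              apply Real.exp_le_exp.mpr
              nlinarith [hlev, hb.le]
            have h1 : dist p r ≤ (δ₀ + γ) * Real.exp (-b * ((R.level x : ℝ) - 0)) := by
              simpa using hpr
            exact add_le_add h1 (le_trans hrq (mul_le_mul_of_nonneg_left hsum hA0))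
        _ = (δ₀ + γ) * ∑ t ∈ Finset.range ((SimpleGraph.Walk.cons h w).length + 1),
              Real.exp (-b * ((R.level x : ℝ) - t)) := by
            rw [SimpleGraph.Walk.length_cons, Finset.sum_range_succ'
              (fun t : ℕ => Real.exp (-b * ((R.level x : ℝ) - t))) (w.length + 1)]
            push_cast
            ring


lemma aux_geom {b : ℝ} (hb : 0 < b) (n : ℝ) (L : ℕ) :
    ∑ t ∈ Finset.range (L + 1), Real.exp (-b * (n - t)) ≤
      (Real.exp b / (Real.exp b - 1)) * Real.exp (-b * (n - L)) := by
  have h1 : 1 < Real.exp b := by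
    rw [← Real.exp_zero]; exact Real.exp_lt_exp.mpr hb
  have hne : Real.exp b ≠ 1 := ne_of_gt h1
  have hrw : ∀ t : ℕ, Real.exp (-b * (n - t)) = Real.exp (-b * n) * (Real.exp b) ^ t := by
    intro t
    rw [← Real.exp_nat_mul, ← Real.exp_add]
    ring_nf
  calc ∑ t ∈ Finset.range (L + 1), Real.exp (-b * (n - t))
      = Real.exp (-b * n) * ∑ t ∈ Finset.range (L + 1), (Real.exp b) ^ t := by
        rw [Finset.mul_sum]; exact Finset.sum_congr rfl (fun t _ => hrw t)
    _ = Real.exp (-b * n) * (((Real.exp b) ^ (L + 1) - 1) / (Real.exp b - 1)) := by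
        rw [geom_sum_eq hne]
    _ ≤ Real.exp (-b * n) * ((Real.exp b) ^ (L + 1) / (Real.exp b - 1)) := by
        apply mul_le_mul_of_nonneg_left _ (Real.exp_pos _).le
        exact div_le_div_of_nonneg_right (by linarith) (by linarith)
    _ = (Real.exp b / (Real.exp b - 1)) * Real.exp (-b * (n - L)) := by
        rw [← Real.exp_nat_mul]
        have hc : Real.exp b - 1 ≠ 0 := by linarith
        field_simp
        rw [← Real.exp_add, ← Real.exp_add]
        congr 1
        push_cast
        ring

/-- Combined walk estimate. -/
lemma aux_walk_est {R R' : RootedGraph X} {Φ : X → Set M} {b γ δ₀ : ℝ}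
    (hb : 0 < b) (hvert : R.Vertical) (hΦ : R.IsIndexMap Φ) (hγ : 0 < γ) (hδ₀ : 0 ≤ δ₀)
    (hexp : R.ExpType Φ b δ₀) (hA : R.IsAIb R' Φ b γ)
    {x y : X} (w : R'.G.Walk x y) {p q : M} (hp : p ∈ Φ x) (hq : q ∈ Φ y) :
    dist p q ≤ ((δ₀ + γ) * (Real.exp b / (Real.exp b - 1))) *
      Real.exp (-b * ((R.level x : ℝ) - w.length)) := by
  have h1 := aux_walk_sum hb hvert hΦ hγ hδ₀ hexp hA w hp hq
  have h2 := aux_geom hb (R.level x : ℝ) w.length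
  have hA0 : (0:ℝ) ≤ δ₀ + γ := by linarith
  calc dist p q ≤ (δ₀ + γ) * ∑ t ∈ Finset.range (w.length + 1),
        Real.exp (-b * ((R.level x : ℝ) - t)) := h1
    _ ≤ (δ₀ + γ) * ((Real.exp b / (Real.exp b - 1)) *
        Real.exp (-b * ((R.level x : ℝ) - w.length))) :=
        mul_le_mul_of_nonneg_left h2 hA0
    _ = _ := by ring

/-- Midpoint splitting in a connected graph. -/
lemma aux_midpoint {G : SimpleGraph X} (hconn : G.Connected) (x y : X) :
    ∀ k, k ≤ G.dist x y → ∃ z, G.dist x z ≤ k ∧ G.dist z y ≤ G.dist x y - k := by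
  intro k
  induction k with
  | zero => intro _; exact ⟨x, by simp, by simp⟩
  | succ k ih =>
      intro hk
      obtain ⟨z, hxz, hzy⟩ := ih (by omega)
      have h0 : G.dist x y ≤ G.dist x z + G.dist z y :=
        hconn.dist_triangle (u := x) (v := z) (w := y)
      have hzy_pos : 1 ≤ G.dist z y := by omega
      have hzne : z ≠ y := by
        intro h; rw [h] at hzy_pos; simp [SimpleGraph.dist_self] at hzy_pos
      obtain ⟨w, hw⟩ := hconn.exists_walk_length_eq_dist z y
      cases w with
      | nil => exact absurd rfl hzne
      | @cons _ z' _ hadj w' =>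
          simp only [SimpleGraph.Walk.length_cons] at hw
          have h1 : G.dist z z' = 1 := SimpleGraph.dist_eq_one_iff_adj.mpr hadj
          have h2 : G.dist z' y ≤ w'.length := SimpleGraph.dist_le w'
          have h3 : G.dist x z' ≤ G.dist x z + G.dist z z' :=
            hconn.dist_triangle (u := x) (v := z) (w := z')
          exact ⟨z', by omega, by omega⟩

/-- The key chain estimate for rays. -/
lemma aux_chain {R R' : RootedGraph X} {Φ : X → Set M} {b γ δ₀ : ℝ}
    (hb : 0 < b) (hvert : R.Vertical) (hΦ : R.IsIndexMap Φ) (hγ : 0 < γ) (hδ₀ : 0 ≤ δ₀)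
    (hexp : R.ExpType Φ b δ₀) (hA : R.IsAIb R' Φ b γ)
    {f g : ℕ → X} (hf : R'.IsRay f) (hg : R'.IsRay g) (i : ℕ)
    {p q : M} (hp : p ∈ Φ (f i)) (hq : q ∈ Φ (g i)) :
    dist p q ≤ (2 * ((δ₀ + γ) * (Real.exp b / (Real.exp b - 1))) * Real.exp (b / 2)) *
      Real.exp (-b * R'.gp (f i) (g i)) := by
  set K := (δ₀ + γ) * (Real.exp b / (Real.exp b - 1)) with hK
  have hKpos : 0 < K := by
    apply mul_pos (by linarith)
    apply div_pos (Real.exp_pos _)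
    have : 1 < Real.exp b := by rw [← Real.exp_zero]; exact Real.exp_lt_exp.mpr hb
    linarith
  set L := R'.G.dist (f i) (g i) with hL
  set k := (L + 1) / 2 with hk
  obtain ⟨z, hxz, hzy⟩ := aux_midpoint R'.conn (f i) (g i) k (by omega)
  obtain ⟨w1, hw1⟩ := R'.conn.exists_walk_length_eq_dist (f i) z
  obtain ⟨w2, hw2⟩ := R'.conn.exists_walk_length_eq_dist (g i) z
  obtain ⟨r, hr⟩ := hΦ.2.1 z
  have hlev_f : R.level (f i) = i := aux_ray_level (aux_ray'_to_ray hvert hA hf) i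
  have hlev_g : R.level (g i) = i := aux_ray_level (aux_ray'_to_ray hvert hA hg) i
  have e1 : dist p r ≤ K * Real.exp (-b * ((i : ℝ) - w1.length)) := by
    have := aux_walk_est hb hvert hΦ hγ hδ₀ hexp hA w1 hp hr
    rwa [hlev_f] at this
  have e2 : dist q r ≤ K * Real.exp (-b * ((i : ℝ) - w2.length)) := by
    have := aux_walk_est hb hvert hΦ hγ hδ₀ hexp hA w2 hq hr
    rwa [hlev_g] at this
  have hcast : ((k : ℕ) : ℝ) ≤ ((L : ℝ) + 1) / 2 := by
    have : ((k : ℕ) : ℝ) * 2 ≤ (L : ℝ) + 1 := by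
      have h2 : k * 2 ≤ L + 1 := by omega
      exact_mod_cast h2
    linarith
  have hl1 : (w1.length : ℝ) ≤ ((L : ℝ) + 1) / 2 := by
    have : w1.length ≤ k := by rw [hw1]; exact hxz
    calc (w1.length : ℝ) ≤ (k : ℝ) := by exact_mod_cast this
      _ ≤ _ := hcast
  have hl2 : (w2.length : ℝ) ≤ ((L : ℝ) + 1) / 2 := by
    have h2 : w2.length ≤ k := by
      rw [hw2, SimpleGraph.dist_comm]
      calc R'.G.dist z (g i) ≤ L - k := hzy
        _ ≤ k := by omega
    calc (w2.length : ℝ) ≤ (k : ℝ) := by exact_mod_cast h2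
      _ ≤ _ := hcast
  have hgp : R'.gp (f i) (g i) = ((i : ℝ) + i - L) / 2 := by
    have lf : R'.level (f i) = i := by rw [aux_level'_eq hvert hA]; exact hlev_f
    have lg : R'.level (g i) = i := by rw [aux_level'_eq hvert hA]; exact hlev_g
    unfold RootedGraph.gp
    rw [lf, lg, ← hL]
  have hmono : ∀ l : ℝ, l ≤ ((L : ℝ) + 1) / 2 →
      Real.exp (-b * ((i : ℝ) - l)) ≤ Real.exp (-b * ((i : ℝ) - ((L : ℝ) + 1) / 2)) := by
    intro l hl
    apply Real.exp_le_exp.mpr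
    nlinarith [hb.le]
  calc dist p q ≤ dist p r + dist q r := by
        rw [dist_comm q r]; exact dist_triangle p r q
    _ ≤ K * Real.exp (-b * ((i : ℝ) - ((L : ℝ) + 1) / 2)) +
        K * Real.exp (-b * ((i : ℝ) - ((L : ℝ) + 1) / 2)) := by
        apply add_le_add
        · exact e1.trans (mul_le_mul_of_nonneg_left (hmono _ hl1) hKpos.le)
        · exact e2.trans (mul_le_mul_of_nonneg_left (hmono _ hl2) hKpos.le)
    _ = (2 * K * Real.exp (b / 2)) * Real.exp (-b * (((i : ℝ) + i - L) / 2)) := by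
        rw [mul_assoc (2 * K), ← Real.exp_add]
        ring_nf
    _ = (2 * K * Real.exp (b / 2)) * Real.exp (-b * R'.gp (f i) (g i)) := by rw [hgp]


lemma aux_point_mem {Φ : X → Set M} {f : ℕ → X} {p : M}
    (h : (⋂ i, Φ (f i)) = {p}) (i : ℕ) : p ∈ Φ (f i) := by
  have hp : p ∈ ⋂ i, Φ (f i) := by rw [h]; exact rfl
  exact Set.mem_iInter.mp hp i

lemma aux_one_lt_exp {b : ℝ} (hb : 0 < b) : 1 < Real.exp b := by
  rw [← Real.exp_zero]; exact Real.exp_lt_exp.mpr hb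

lemma aux_C0_pos {b γ δ₀ : ℝ} (hb : 0 < b) (hγ : 0 < γ) (hδ₀ : 0 ≤ δ₀) :
    0 < 2 * ((δ₀ + γ) * (Real.exp b / (Real.exp b - 1))) * Real.exp (b / 2) := by
  have h1 := aux_one_lt_exp hb
  apply mul_pos _ (Real.exp_pos _)
  apply mul_pos two_pos
  exact mul_pos (by linarith) (div_pos (Real.exp_pos _) (by linarith))

lemma aux_same_point {R R' : RootedGraph X} {Φ : X → Set M} {b γ δ₀ : ℝ}
    (hb : 0 < b) (hvert : R.Vertical) (hΦ : R.IsIndexMap Φ) (hγ : 0 < γ) (hδ₀ : 0 ≤ δ₀)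
    (hexp : R.ExpType Φ b δ₀) (hA : R.IsAIb R' Φ b γ)
    {f g : ℕ → X} (hf : R'.IsRay f) (hg : R'.IsRay g)
    (htop : R'.gpRay f g = ⊤) {p q : M}
    (hp : ∀ i, p ∈ Φ (f i)) (hq : ∀ i, q ∈ Φ (g i)) : p = q := by
  set C₀ := 2 * ((δ₀ + γ) * (Real.exp b / (Real.exp b - 1))) * Real.exp (b / 2) with hC
  have hC0 : 0 < C₀ := aux_C0_pos hb hγ hδ₀
  by_contra hne
  have hd : 0 < dist p q := dist_pos.mpr hne
  have hu : 0 < C₀ / dist p q := div_pos hC0 hd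
  set N := max 0 (Real.log (C₀ / dist p q) / b + 1) with hN
  have hlt : ENNReal.ofReal N < ⊤ := ENNReal.ofReal_lt_top
  rw [← htop, RootedGraph.gpRay, lt_iSup_iff] at hlt
  obtain ⟨i, hi⟩ := hlt
  have hgpi : N < R'.gp (f i) (g i) := by
    by_contra hle
    push_neg at hle
    exact absurd (ENNReal.ofReal_le_ofReal hle) (not_le.mpr hi)
  have hchain := aux_chain hb hvert hΦ hγ hδ₀ hexp hA hf hg i (hp i) (hq i)
  have hexp_lt : Real.exp (-b * R'.gp (f i) (g i)) <
      Real.exp (-Real.log (C₀ / dist p q) - b) := by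
    apply Real.exp_lt_exp.mpr
    have h2 : Real.log (C₀ / dist p q) / b + 1 ≤ N := le_max_right _ _
    have h3 : Real.log (C₀ / dist p q) / b + 1 < R'.gp (f i) (g i) := lt_of_le_of_lt h2 hgpi
    have h4 : Real.log (C₀ / dist p q) / b * b = Real.log (C₀ / dist p q) := by
      field_simp
    nlinarith [h3, hb]
  have hel : Real.exp (-Real.log (C₀ / dist p q) - b) = dist p q / C₀ * Real.exp (-b) := by
    rw [Real.exp_sub, Real.exp_neg, Real.exp_log hu]
    rw [inv_div, Real.exp_neg, ← div_eq_mul_inv]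
  have : dist p q < dist p q := by
    calc dist p q ≤ C₀ * Real.exp (-b * R'.gp (f i) (g i)) := hchain
      _ < C₀ * (dist p q / C₀ * Real.exp (-b)) := by
          apply mul_lt_mul_of_pos_left _ hC0
          rw [← hel]; exact hexp_lt
      _ = dist p q * Real.exp (-b) := by field_simp
      _ < dist p q := by
          have : Real.exp (-b) < 1 := by
            rw [← Real.exp_zero]; exact Real.exp_lt_exp.mpr (by linarith)
          nlinarith
  exact absurd this (lt_irrefl _)

lemma aux_level_le_dist {R : RootedGraph X} (hvert : R.Vertical) (u v : X) :
    R.level v ≤ R.level u + R.G.dist u v := by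
  obtain ⟨w, hw⟩ := R.conn.exists_walk_length_eq_dist u v
  have := aux_walk_level (R := R) (G' := R.G)
    (fun a c h => by rcases hvert a c h with h' | h' <;> omega) w
  omega

lemma aux_penult {R : RootedGraph X} (hvert : R.Vertical) {y z : X} {k : ℕ}
    (hz : z ∈ R.J (k + 1) y) : ∃ u, u ∈ R.J k y ∧ z ∈ R.J 1 u := by
  obtain ⟨hlev, hdist⟩ := hz
  obtain ⟨w, hw⟩ := R.conn.exists_walk_length_eq_dist z y
  rw [SimpleGraph.dist_comm] at hw
  rw [hdist] at hw
  cases w with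
  | nil => simp at hw
  | @cons _ u _ hadj w' =>
      simp only [SimpleGraph.Walk.length_cons] at hw
      have hdu : R.G.dist u y ≤ k := by
        have := SimpleGraph.dist_le w'
        omega
      have hdyu : R.G.dist y u = R.G.dist u y := SimpleGraph.dist_comm ..
      have htr : R.G.dist y z ≤ R.G.dist y u + R.G.dist u z :=
        R.conn.dist_triangle (u := y) (v := u) (w := z)
      have huz : R.G.dist u z = 1 :=
        SimpleGraph.dist_eq_one_iff_adj.mpr hadj.symm
      have hk : R.G.dist y u = k := by omega
      have hlu : R.level u ≤ R.level y + k := by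
        have := aux_level_le_dist hvert y u
        omega
      have hlevu : R.level u = R.level y + k := by
        rcases hvert z u hadj with h' | h' <;> omega
      refine ⟨u, ⟨hlevu, hk⟩, ⟨by omega, huz⟩⟩

lemma aux_decomp {R : RootedGraph X} (hvert : R.Vertical) {x z : X} {m : ℕ}
    (hz : z ∈ R.J (m + 1) x) : ∃ y, y ∈ R.J 1 x ∧ z ∈ R.J m y := by
  obtain ⟨hlev, hdist⟩ := hz
  obtain ⟨w, hw⟩ := R.conn.exists_walk_length_eq_dist x z
  rw [hdist] at hw
  cases w with
  | nil => simp at hw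
  | @cons _ y _ hadj w' =>
      simp only [SimpleGraph.Walk.length_cons] at hw
      have hdyz : R.G.dist y z ≤ m := by
        have := SimpleGraph.dist_le w'
        omega
      have hlz : R.level z ≤ R.level y + R.G.dist y z := aux_level_le_dist hvert y z
      have hly : R.level y = R.level x + 1 := by
        rcases hvert x y hadj with h' | h' <;> omega
      have hxy : R.G.dist x y = 1 := SimpleGraph.dist_eq_one_iff_adj.mpr hadj
      exact ⟨y, ⟨hly, hxy⟩, ⟨by omega, by omega⟩⟩

lemma aux_ancestor {R : RootedGraph X} (hvert : R.Vertical) {Φ : X → Set M}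
    (hΦ : R.IsIndexMap Φ) :
    ∀ (k : ℕ) {z y : X}, z ∈ R.J k y → ∀ m ≤ k, ∃ u, u ∈ R.J m y ∧ Φ z ⊆ Φ u := by
  intro k
  induction k with
  | zero =>
      intro z y hz m hm
      have : m = 0 := by omega
      subst this
      exact ⟨z, hz, subset_rfl⟩
  | succ k ih =>
      intro z y hz m hm
      rcases Nat.eq_or_lt_of_le hm with he | hlt
      · subst he
        exact ⟨z, hz, subset_rfl⟩
      · obtain ⟨u', hu', hz1⟩ := aux_penult hvert hz
        obtain ⟨u, hu, hsub⟩ := ih hu' m (by omega)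
        exact ⟨u, hu, (hΦ.2.2.1 u' z hz1).trans hsub⟩

lemma aux_koenig_step {R : RootedGraph X} (hvert : R.Vertical) {Φ : X → Set M}
    (hΦ : R.IsIndexMap Φ) {p : M} {x : X}
    (hx : ∀ m, ∃ z, z ∈ R.J m x ∧ p ∈ Φ z) :
    ∃ y, y ∈ R.J 1 x ∧ ∀ m, ∃ z, z ∈ R.J m y ∧ p ∈ Φ z := by
  have hz : ∀ m : ℕ, ∃ zy : X × X, zy.2 ∈ R.J 1 x ∧ zy.1 ∈ R.J m zy.2 ∧ p ∈ Φ zy.1 := by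
    intro m
    obtain ⟨z, hz, hpz⟩ := hx (m + 1)
    obtain ⟨y, hy, hzy⟩ := aux_decomp hvert hz
    exact ⟨(z, y), hy, hzy, hpz⟩
  choose zy hy hzJ hpz using hz
  haveI : Finite (R.J 1 x) := by
    apply Set.Finite.to_subtype
    apply (R.locFin x).subset
    intro y hy2
    exact SimpleGraph.dist_eq_one_iff_adj.mp hy2.2
  obtain ⟨y0, hy0⟩ :=
    Finite.exists_infinite_fiber (fun m => (⟨(zy m).2, hy m⟩ : R.J 1 x))
  have hinf : {m | (zy m).2 = y0.1}.Infinite := by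
    apply Set.Infinite.mono _ (Set.infinite_coe_iff.mp hy0)
    intro m hm
    exact congrArg Subtype.val hm
  refine ⟨y0.1, y0.2, ?_⟩
  intro m
  obtain ⟨m', hm'mem, hm'gt⟩ := hinf.exists_gt m
  have hJ : (zy m').1 ∈ R.J m' y0.1 := by rw [← hm'mem]; exact hzJ m'
  obtain ⟨u, huJ, hsub⟩ := aux_ancestor hvert hΦ m' hJ m (le_of_lt hm'gt)
  exact ⟨u, huJ, hsub (hpz m')⟩

lemma aux_exists_ray_through {R : RootedGraph X} (hvert : R.Vertical) {Φ : X → Set M}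
    (hΦ : R.IsIndexMap Φ) {p : M}
    (hroot : ∀ m, ∃ z, z ∈ R.J m R.root ∧ p ∈ Φ z) :
    ∃ f, R.IsRay f ∧ ∀ i, p ∈ Φ (f i) := by
  set P : X → Prop := fun x => ∀ m, ∃ z, z ∈ R.J m x ∧ p ∈ Φ z with hP
  have step : ∀ s : {x // P x}, ∃ y, y ∈ R.J 1 s.1 ∧ P y := fun s =>
    aux_koenig_step hvert hΦ s.2
  let F : {x // P x} → {x // P x} := fun s => ⟨(step s).choose, (step s).choose_spec.2⟩
  let g : ℕ → {x // P x} := fun n => F^[n] ⟨R.root, hroot⟩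
  have hg0 : g 0 = ⟨R.root, hroot⟩ := rfl
  have hgs : ∀ n, g (n + 1) = F (g n) := fun n => Function.iterate_succ_apply' F n _
  refine ⟨fun n => (g n).1, ⟨by show (g 0).1 = R.root; rw [hg0], ?_⟩, ?_⟩
  · intro i
    show (g (i + 1)).1 ∈ R.J 1 (g i).1
    rw [hgs i]
    exact (step (g i)).choose_spec.1
  · intro i
    obtain ⟨z, hz, hpz⟩ := (g i).2 0
    have hz0 : R.G.dist (g i).1 z = 0 := hz.2
    have hzz : (g i).1 = z := R.conn.dist_eq_zero_iff.mp hz0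
    show p ∈ Φ (g i).1
    rw [hzz]
    exact hpz


lemma aux_gp_lower {R R' : RootedGraph X} {Φ : X → Set M} {b γ : ℝ}
    (hvert : R.Vertical) (hA : R.IsAIb R' Φ b γ)
    {f g : ℕ → X} (hf : R'.IsRay f) (hg : R'.IsRay g) (n : ℕ)
    (hsd : setDist (Φ (f n)) (Φ (g n)) ≤ γ * Real.exp (-b * (n : ℝ))) :
    (n : ℝ) - 1 / 2 ≤ R'.gp (f n) (g n) := by
  have lfR : R.level (f n) = n := aux_ray_level (aux_ray'_to_ray hvert hA hf) n
  have lgR : R.level (g n) = n := aux_ray_level (aux_ray'_to_ray hvert hA hg) n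
  have lf : R'.level (f n) = n := by rw [aux_level'_eq hvert hA]; exact lfR
  have lg : R'.level (g n) = n := by rw [aux_level'_eq hvert hA]; exact lgR
  have hdle : R'.G.dist (f n) (g n) ≤ 1 := by
    by_cases he : f n = g n
    · rw [he, SimpleGraph.dist_self]; omega
    · have hadj : R'.G.Adj (f n) (g n) := by
        apply (hA.2 _ _).mpr
        refine Or.inr ⟨by rw [lfR, lgR], he, ?_⟩
        rw [lfR]
        exact hsd
      exact (SimpleGraph.dist_eq_one_iff_adj.mpr hadj).le
  unfold RootedGraph.gp
  rw [lf, lg]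
  have hcast : (R'.G.dist (f n) (g n) : ℝ) ≤ 1 := by exact_mod_cast hdle
  linarith

end AuxLemmas


set_option maxHeartbeats 2000000 in
/-- Theorem 4.5: for the AI_b-graph of an index map of exponential
type-(b), the canonical map `κ : ∂X → K` is a well-defined bijection onto the attractor,
and a Hölder equivalence: `ρ(κξ,κη)^{a/b} ≍ θ_a(ξ,η)`. -/
theorem AIb_kappa_holder_equiv {X M B : Type*} [MetricSpace M] [CompleteSpace M]
    [MetricSpace B]
    (R R' : RootedGraph X) (Φ : X → Set M)
    (hvert : R.Vertical) (hΦ : R.IsIndexMap Φ)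
    (b γ δ₀ : ℝ) (hb : 0 < b) (hγ : 0 < γ) (hδ₀ : 0 ≤ δ₀)
    (hexp : R.ExpType Φ b δ₀)
    (hA : R.IsAIb R' Φ b γ)
    (lim : (ℕ → X) → B) (hB : R'.BoundaryOf lim)
    (a c₁ c₂ : ℝ) (ha : 0 < a) (hc₁ : 0 < c₁) (hc₂ : 0 < c₂)
    (hθ : R'.GromovLike lim a c₁ c₂) :
    ∃ κ : B → M,
      (∀ f : ℕ → X, R'.IsRay f → (⋂ i, Φ (f i)) = {κ (lim f)}) ∧
      Function.Injective κ ∧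
      Set.range κ = R.attractor Φ ∧
      ∃ C : ℝ, 1 ≤ C ∧ ∀ ξ η : B,
        C⁻¹ * dist ξ η ≤ dist (κ ξ) (κ η) ^ (a / b) ∧
          dist (κ ξ) (κ η) ^ (a / b) ≤ C * dist ξ η := by
  classical
  have hray' : ∀ f, R'.IsRay f → R.IsRay f := fun f hf => aux_ray'_to_ray hvert hA hf
  have hsel : ∀ ξ : B, ∃ f, R'.IsRay f ∧ lim f = ξ := hB.1
  have hpoint : ∀ f, R'.IsRay f → ∃ p, (⋂ i, Φ (f i)) = {p} :=
    fun f hf => hΦ.2.2.2 f (hray' f hf)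
  set F : B → (ℕ → X) := fun ξ => (hsel ξ).choose with hFdef
  have hF : ∀ ξ, R'.IsRay (F ξ) ∧ lim (F ξ) = ξ := fun ξ => (hsel ξ).choose_spec
  set κ : B → M := fun ξ => (hpoint (F ξ) (hF ξ).1).choose with hκdef
  have hκ : ∀ ξ, (⋂ i, Φ (F ξ i)) = {κ ξ} := fun ξ => (hpoint (F ξ) (hF ξ).1).choose_spec
  have hκmem : ∀ ξ i, κ ξ ∈ Φ (F ξ i) := fun ξ i => aux_point_mem (hκ ξ) i
  -- Property 1 : well-definedness
  have prop1 : ∀ f, R'.IsRay f → (⋂ i, Φ (f i)) = {κ (lim f)} := by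
    intro f hf
    obtain ⟨q, hq⟩ := hpoint f hf
    have hqmem : ∀ i, q ∈ Φ (f i) := fun i => aux_point_mem hq i
    have hlim : lim (F (lim f)) = lim f := (hF (lim f)).2
    have htop : R'.gpRay (F (lim f)) f = ⊤ := (hB.2 _ f (hF _).1 hf).mp hlim
    have hqe : κ (lim f) = q :=
      aux_same_point hb hvert hΦ hγ hδ₀ hexp hA (hF _).1 hf htop (hκmem _) hqmem
    rw [hq, hqe]
  have hmem' : ∀ f, R'.IsRay f → ∀ i, κ (lim f) ∈ Φ (f i) :=
    fun f hf i => aux_point_mem (prop1 f hf) i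
  -- Injectivity
  have hinj : Function.Injective κ := by
    intro ξ η h
    have hkey : ∀ n : ℕ,
        ((n : ℝ) : ℝ) - 1 / 2 ≤ R'.gp (F ξ n) (F η n) := by
      intro n
      apply aux_gp_lower hvert hA (hF ξ).1 (hF η).1 n
      have h0 : setDist (Φ (F ξ n)) (Φ (F η n)) ≤ dist (κ ξ) (κ η) :=
        aux_setDist_le_dist (hκmem ξ n) (hκmem η n)
      rw [h, _root_.dist_self] at h0
      exact h0.trans (le_of_lt (mul_pos hγ (Real.exp_pos _)))
    have htop : R'.gpRay (F ξ) (F η) = ⊤ := by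
      apply top_unique
      rw [← ENNReal.iSup_natCast]
      apply iSup_le
      intro n
      have h1 : ((n : ℝ≥0∞)) = ENNReal.ofReal (n : ℝ) := by
        rw [ENNReal.ofReal_natCast]
      rw [h1]
      refine le_trans (ENNReal.ofReal_le_ofReal ?_)
        (le_iSup (fun i => ENNReal.ofReal (R'.gp (F ξ i) (F η i))) (n + 1))
      have := hkey (n + 1)
      push_cast at this ⊢
      linarith
    have := (hB.2 _ _ (hF ξ).1 (hF η).1).mpr htop
    rw [(hF ξ).2, (hF η).2] at this
    exact this
  -- Range = attractor
  have hrange : Set.range κ = R.attractor Φ := by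
    apply Set.Subset.antisymm
    · rintro _ ⟨ξ, rfl⟩
      apply Set.mem_iInter.mpr
      intro n
      apply Set.mem_biUnion (show F ξ n ∈ {x | R.level x = n} from
        aux_ray_level (hray' _ (hF ξ).1) n)
      exact hκmem ξ n
    · intro p hp
      have hroot : ∀ m, ∃ z, z ∈ R.J m R.root ∧ p ∈ Φ z := by
        intro m
        have := Set.mem_iInter.mp hp m
        obtain ⟨x, hx, hpx⟩ := Set.mem_iUnion₂.mp this
        have hx' : R.level x = m := hx
        refine ⟨x, ⟨?_, hx'⟩, hpx⟩
        rw [aux_level_root]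
        omega
      obtain ⟨f, hfray, hpf⟩ := aux_exists_ray_through hvert hΦ hroot
      have hfray' : R'.IsRay f := aux_ray_to_ray' hvert hA hfray
      have h1 := prop1 f hfray'
      have h2 : p ∈ ⋂ i, Φ (f i) := Set.mem_iInter.mpr hpf
      rw [h1] at h2
      exact ⟨lim f, h2.symm⟩
  -- Hölder equivalence
  set C₀ := 2 * ((δ₀ + γ) * (Real.exp b / (Real.exp b - 1))) * Real.exp (b / 2) with hC₀def
  have hC₀pos : 0 < C₀ := aux_C0_pos hb hγ hδ₀
  set c₃ := γ * Real.exp (-(3 * b) / 2) with hc₃def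
  have hc₃pos : 0 < c₃ := mul_pos hγ (Real.exp_pos _)
  set C : ℝ := max 1 (max (C₀ ^ (a / b) / c₁) (c₂ / c₃ ^ (a / b))) with hCdef
  have hC1 : 1 ≤ C := le_max_left _ _
  have hCpos : 0 < C := lt_of_lt_of_le one_pos hC1
  have hab : 0 < a / b := div_pos ha hb
  refine ⟨κ, prop1, hinj, hrange, C, hC1, ?_⟩
  intro ξ η
  by_cases hne : ξ = η
  · subst hne
    rw [_root_.dist_self, _root_.dist_self, Real.zero_rpow (ne_of_gt hab)]
    constructor <;> simp
  -- main case
  set T := (R'.gpB lim ξ η).toReal with hTdef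
  have hT0 : 0 ≤ T := ENNReal.toReal_nonneg
  set d := dist (κ ξ) (κ η) with hddef
  have hd : 0 < d := dist_pos.mpr (fun h => hne (hinj h))
  have hdC : 0 < C₀ / d := div_pos hC₀pos hd
  -- every Gromov product term is bounded by M
  set Mb := Real.log (C₀ / d) / b with hMdef
  have step1 : ∀ f g : ℕ → X, R'.IsRay f → R'.IsRay g → lim f = ξ → lim g = η →
      ∀ i, d ≤ C₀ * Real.exp (-b * (R'.gp (f i) (g i))) := by
    intro f g hf hg hlf hlg i
    have h1 : κ ξ ∈ Φ (f i) := by rw [← hlf]; exact hmem' f hf i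
    have h2 : κ η ∈ Φ (g i) := by rw [← hlg]; exact hmem' g hg i
    exact aux_chain hb hvert hΦ hγ hδ₀ hexp hA hf hg i h1 h2
  have step2 : ∀ f g : ℕ → X, R'.IsRay f → R'.IsRay g → lim f = ξ → lim g = η →
      ∀ i, R'.gp (f i) (g i) ≤ Mb := by
    intro f g hf hg hlf hlg i
    have h1 := step1 f g hf hg hlf hlg i
    have h2 : d * Real.exp (b * R'.gp (f i) (g i)) ≤ C₀ := by
      have h3 := mul_le_mul_of_nonneg_right h1 (Real.exp_pos (b * R'.gp (f i) (g i))).le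
      calc d * Real.exp (b * R'.gp (f i) (g i)) ≤
          C₀ * Real.exp (-b * R'.gp (f i) (g i)) * Real.exp (b * R'.gp (f i) (g i)) := h3
        _ = C₀ := by
            rw [mul_assoc, ← Real.exp_add]
            have hz : -b * R'.gp (f i) (g i) + b * R'.gp (f i) (g i) = 0 := by ring
            rw [hz, Real.exp_zero, mul_one]
    have h4 : Real.exp (b * R'.gp (f i) (g i)) ≤ C₀ / d := by
      rw [le_div_iff₀ hd]
      linarith [h2, mul_comm d (Real.exp (b * R'.gp (f i) (g i)))]
    have h5 : b * R'.gp (f i) (g i) ≤ Real.log (C₀ / d) :=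
      (Real.le_log_iff_exp_le hdC).mpr h4
    rw [hMdef, le_div_iff₀ hb]
    linarith [mul_comm b (R'.gp (f i) (g i))]
  have hM0 : 0 ≤ Mb := by
    have h0 := step2 (F ξ) (F η) (hF ξ).1 (hF η).1 (hF ξ).2 (hF η).2 0
    have hf0 : F ξ 0 = R'.root := (hF ξ).1.1
    have hg0 : F η 0 = R'.root := (hF η).1.1
    have : R'.gp (F ξ 0) (F η 0) = 0 := by
      rw [RootedGraph.gp, hf0, hg0, SimpleGraph.dist_self, aux_level_root]
      norm_num
    linarith [this ▸ h0]
  have step3 : R'.gpB lim ξ η ≤ ENNReal.ofReal Mb := by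
    rw [RootedGraph.gpB]
    refine iSup_le fun f => iSup_le fun g => iSup_le fun hfg => ?_
    obtain ⟨hf, hg, hlf, hlg⟩ := hfg
    rw [RootedGraph.gpRay]
    exact iSup_le fun i => ENNReal.ofReal_le_ofReal (step2 f g hf hg hlf hlg i)
  have hgpBtop : R'.gpB lim ξ η ≠ ⊤ :=
    fun h => absurd (h ▸ step3) (by simp)
  have step5 : T ≤ Mb := by
    rw [hTdef]
    exact ENNReal.toReal_le_of_le_ofReal hM0 step3
  have step6 : d ≤ C₀ * Real.exp (-b * T) := by
    have h1 : C₀ * Real.exp (-b * Mb) = d := by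
      rw [hMdef]
      have : -b * (Real.log (C₀ / d) / b) = -Real.log (C₀ / d) := by
        field_simp
      rw [this, Real.exp_neg, Real.exp_log hdC, inv_div]
      field_simp
    have h2 : Real.exp (-b * Mb) ≤ Real.exp (-b * T) := by
      apply Real.exp_le_exp.mpr
      nlinarith [step5, hb]
    nlinarith [h1, h2, hC₀pos]
  have step7 : c₃ * Real.exp (-b * T) ≤ d := by
    have hTlow : ∀ n : ℕ, d ≤ γ * Real.exp (-b * (n : ℝ)) → (n : ℝ) - 1 / 2 ≤ T := by
      intro n hdn
      have hgp := aux_gp_lower hvert hA (hF ξ).1 (hF η).1 n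
        (le_trans (aux_setDist_le_dist (hκmem ξ n) (hκmem η n)) hdn)
      by_cases hn : (n : ℝ) - 1 / 2 ≤ 0
      · linarith [hT0]
      push_neg at hn
      have h1 : ENNReal.ofReal ((n : ℝ) - 1 / 2) ≤ R'.gpB lim ξ η := by
        refine le_trans (ENNReal.ofReal_le_ofReal hgp) ?_
        refine le_trans (le_iSup (fun i => ENNReal.ofReal (R'.gp (F ξ i) (F η i))) n) ?_
        have : R'.gpRay (F ξ) (F η) ≤ R'.gpB lim ξ η := by
          rw [RootedGraph.gpB]
          exact le_iSup_of_le (F ξ) (le_iSup_of_le (F η)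
            (le_iSup_of_le ⟨(hF ξ).1, (hF η).1, (hF ξ).2, (hF η).2⟩ le_rfl))
        exact this
      have h2 := ENNReal.toReal_mono hgpBtop h1
      rwa [ENNReal.toReal_ofReal (by linarith)] at h2
    by_cases hcase : d ≤ γ
    · have hlog0 : 0 ≤ Real.log (γ / d) := Real.log_nonneg (by rw [le_div_iff₀ hd]; linarith)
      set n := Nat.floor (Real.log (γ / d) / b) with hn
      have hnle : (n : ℝ) ≤ Real.log (γ / d) / b := Nat.floor_le (by positivity)
      have hngt : Real.log (γ / d) / b < (n : ℝ) + 1 := Nat.lt_floor_add_one _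
      have hdn : d ≤ γ * Real.exp (-b * (n : ℝ)) := by
        have h1 : Real.exp (-Real.log (γ / d)) ≤ Real.exp (-b * (n : ℝ)) := by
          apply Real.exp_le_exp.mpr
          have : b * (n : ℝ) ≤ Real.log (γ / d) := by
            rw [← le_div_iff₀' hb]
            exact hnle
          linarith
        have h2 : Real.exp (-Real.log (γ / d)) = d / γ := by
          rw [Real.exp_neg, Real.exp_log (div_pos hγ hd), inv_div]
        rw [h2] at h1
        calc d = γ * (d / γ) := by field_simp
          _ ≤ γ * Real.exp (-b * (n : ℝ)) := mul_le_mul_of_nonneg_left h1 hγ.le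
      have hTn := hTlow n hdn
      have hexpT : Real.exp (-b * T) ≤ Real.exp (-Real.log (γ / d)) * Real.exp (3 * b / 2) := by
        rw [← Real.exp_add]
        apply Real.exp_le_exp.mpr
        have h3 : Real.log (γ / d) / b * b = Real.log (γ / d) := by field_simp
        nlinarith [hTn, hnle, hngt, hb]
      have h2 : Real.exp (-Real.log (γ / d)) = d / γ := by
        rw [Real.exp_neg, Real.exp_log (div_pos hγ hd), inv_div]
      rw [h2] at hexpT
      calc c₃ * Real.exp (-b * T) ≤ c₃ * (d / γ * Real.exp (3 * b / 2)) :=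
            mul_le_mul_of_nonneg_left hexpT hc₃pos.le
        _ = d * (Real.exp (-(3 * b) / 2) * Real.exp (3 * b / 2)) := by
            rw [hc₃def]; field_simp
        _ = d := by
            rw [← Real.exp_add]
            have hz : -(3 * b) / 2 + 3 * b / 2 = 0 := by ring
            rw [hz, Real.exp_zero, mul_one]
    · push_neg at hcase
      have h1 : Real.exp (-b * T) ≤ 1 := by
        rw [← Real.exp_zero]
        apply Real.exp_le_exp.mpr
        nlinarith [hT0, hb]
      have h2 : Real.exp (-(3 * b) / 2) ≤ 1 := by
        rw [← Real.exp_zero]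
        apply Real.exp_le_exp.mpr
        linarith
      calc c₃ * Real.exp (-b * T) ≤ c₃ * 1 := mul_le_mul_of_nonneg_left h1 hc₃pos.le
        _ = γ * Real.exp (-(3 * b) / 2) := by rw [mul_one]
        _ ≤ γ * 1 := mul_le_mul_of_nonneg_left h2 hγ.le
        _ ≤ d := by rw [mul_one]; exact hcase.le
  -- θ bounds
  obtain ⟨hθ1, hθ2⟩ := hθ ξ η hne
  -- rpow computations
  have hpow_exp : (Real.exp (-b * T)) ^ (a / b) = Real.exp (-a * T) := by
    rw [Real.rpow_def_of_pos (Real.exp_pos _), Real.log_exp]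
    congr 1
    field_simp
  have hup : d ^ (a / b) ≤ C * dist ξ η := by
    have h1 : d ^ (a / b) ≤ (C₀ * Real.exp (-b * T)) ^ (a / b) :=
      Real.rpow_le_rpow hd.le step6 hab.le
    have h2 : (C₀ * Real.exp (-b * T)) ^ (a / b) =
        C₀ ^ (a / b) * Real.exp (-a * T) := by
      rw [Real.mul_rpow hC₀pos.le (Real.exp_pos _).le, hpow_exp]
    have h3 : Real.exp (-a * T) ≤ dist ξ η / c₁ := by
      rw [le_div_iff₀ hc₁]
      linarith [hθ1]
    have h4 : C₀ ^ (a / b) / c₁ ≤ C := le_trans (le_max_left _ _) (le_max_right _ _)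
    have h5 : 0 < C₀ ^ (a / b) := Real.rpow_pos_of_pos hC₀pos _
    calc d ^ (a / b) ≤ C₀ ^ (a / b) * Real.exp (-a * T) := h1.trans_eq h2
      _ ≤ C₀ ^ (a / b) * (dist ξ η / c₁) := mul_le_mul_of_nonneg_left h3 h5.le
      _ = (C₀ ^ (a / b) / c₁) * dist ξ η := by ring
      _ ≤ C * dist ξ η := mul_le_mul_of_nonneg_right h4 dist_nonneg
  have hlow : C⁻¹ * dist ξ η ≤ d ^ (a / b) := by
    have h1 : (c₃ * Real.exp (-b * T)) ^ (a / b) ≤ d ^ (a / b) :=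
      Real.rpow_le_rpow (by positivity) step7 hab.le
    have h2 : (c₃ * Real.exp (-b * T)) ^ (a / b) =
        c₃ ^ (a / b) * Real.exp (-a * T) := by
      rw [Real.mul_rpow hc₃pos.le (Real.exp_pos _).le, hpow_exp]
    have h5 : 0 < c₃ ^ (a / b) := Real.rpow_pos_of_pos hc₃pos _
    have h3 : dist ξ η ≤ (c₂ / c₃ ^ (a / b)) * d ^ (a / b) := by
      calc dist ξ η ≤ c₂ * Real.exp (-a * T) := hθ2
        _ = (c₂ / c₃ ^ (a / b)) * (c₃ ^ (a / b) * Real.exp (-a * T)) := by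
            field_simp
        _ ≤ (c₂ / c₃ ^ (a / b)) * d ^ (a / b) := by
            apply mul_le_mul_of_nonneg_left (h2 ▸ h1)
            positivity
    have h4 : c₂ / c₃ ^ (a / b) ≤ C := le_trans (le_max_right _ _) (le_max_right _ _)
    have h6 : dist ξ η ≤ C * d ^ (a / b) := by
      refine h3.trans (mul_le_mul_of_nonneg_right h4 ?_)
      positivity
    rw [inv_mul_le_iff₀ hCpos]
    exact h6
  exact ⟨hlow, hup⟩
end

section
/- Let Φ be an index map of exponential type-(b) with attractor K, and suppose (K,ρ) is a doubling metric space. Then condition (S_b) holds if and only if condition (S_b') holds: there exist c_1 > 0 and ℓ_1 such that for all n ≥ 0 and all ξ ∈ K, #{x ∈ X_n : K_x ∩ B(ξ, c_1 e^{−bn}) ≠ ∅} ≤ ℓ_1. -/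
open SimpleGraph Metric
open scoped ENNReal ENat

private lemma dist_getVert_le {X : Type*} {G : SimpleGraph X} (hconn : G.Connected) :
    ∀ {u v : X} (p : G.Walk u v) (i : ℕ), G.dist u (p.getVert i) ≤ i := by
  intro u v p
  induction p with
  | nil => intro i; simp [SimpleGraph.Walk.getVert_of_length_le, SimpleGraph.dist_self]
  | @cons a b c h q ih =>
    intro i
    cases i with
    | zero => simp [SimpleGraph.Walk.getVert_zero, SimpleGraph.dist_self]
    | succ i =>
      have h1 : G.dist a b ≤ 1 := by
        simpa using SimpleGraph.dist_le (SimpleGraph.Walk.cons h SimpleGraph.Walk.nil)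
      calc G.dist a ((SimpleGraph.Walk.cons h q).getVert (i+1))
          = G.dist a (q.getVert i) := rfl
        _ ≤ G.dist a b + G.dist b (q.getVert i) := hconn.dist_triangle
        _ ≤ 1 + i := add_le_add h1 (ih i)
        _ = i + 1 := by omega

private lemma level_set_finite {X : Type*} (R : RootedGraph X) (n : ℕ) :
    {x | R.level x = n}.Finite := by
  induction n with
  | zero =>
    refine Set.Finite.subset (Set.finite_singleton R.root) (fun x hx => ?_)
    have : R.root = x := (R.conn R.root x).dist_eq_zero_iff.mp hx
    simp [this.symm]
  | succ n ih =>
    refine Set.Finite.subset (Set.Finite.biUnion ih (fun y _ => R.locFin y)) (fun x hx => ?_)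
    have hx' : R.G.dist R.root x = n + 1 := hx
    obtain ⟨p, hp⟩ := (R.conn R.root x).exists_walk_length_eq_dist
    have hlen : p.length = n + 1 := by rw [hp, hx']
    set y := p.getVert n with hy
    have hadj : R.G.Adj y x := by
      have := p.adj_getVert_succ (i := n) (by omega)
      rwa [show p.getVert (n+1) = x by
        rw [← hlen]; exact p.getVert_length] at this
    have hle : R.G.dist R.root y ≤ n := dist_getVert_le R.conn p n
    have hge : n ≤ R.G.dist R.root y := by
      have h1 : R.G.dist y x ≤ 1 := by
        simpa using SimpleGraph.dist_le (SimpleGraph.Walk.cons hadj SimpleGraph.Walk.nil)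
      have := R.conn.dist_triangle (u := R.root) (v := y) (w := x)
      omega
    exact Set.mem_biUnion (show R.level y = n from le_antisymm hle hge) hadj

private lemma cover_iter {M : Type*} [MetricSpace M] {K : Set M} {ℓ : ℕ}
    (h : ∀ ξ ∈ K, ∀ r : ℝ, ∃ s : Finset M, ↑s ⊆ K ∧ s.card ≤ ℓ ∧
      Metric.ball ξ r ∩ K ⊆ ⋃ η ∈ s, Metric.ball η (r / 2)) :
    ∀ j : ℕ, ∀ ξ ∈ K, ∀ r : ℝ, ∃ s : Finset M, ↑s ⊆ K ∧ s.card ≤ ℓ ^ j ∧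
      Metric.ball ξ r ∩ K ⊆ ⋃ η ∈ s, Metric.ball η (r / 2 ^ j) := by
  classical
  intro j
  induction j with
  | zero =>
    intro ξ hξ r
    exact ⟨{ξ}, by simpa using hξ, by simp, by
      intro q hq; simpa using hq.1⟩
  | succ j ih =>
    intro ξ hξ r
    obtain ⟨s, hsK, hscard, hscov⟩ := h ξ hξ r
    have hch : ∀ η : M, ∃ t : Finset M, (η ∈ K → (↑t ⊆ K ∧ t.card ≤ ℓ ^ j ∧
        Metric.ball η (r / 2) ∩ K ⊆ ⋃ μ ∈ t, Metric.ball μ (r / 2 / 2 ^ j))) := by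
      intro η
      by_cases hη : η ∈ K
      · obtain ⟨t, ht⟩ := ih η hη (r / 2)
        exact ⟨t, fun _ => ht⟩
      · exact ⟨∅, fun h => absurd h hη⟩
    choose g hg using hch
    refine ⟨s.biUnion g, ?_, ?_, ?_⟩
    · intro μ hμ
      simp only [Finset.coe_biUnion, Set.mem_iUnion] at hμ
      obtain ⟨η, hηs, hμg⟩ := hμ
      exact ((hg η (hsK hηs)).1) hμg
    · calc (s.biUnion g).card ≤ s.card * ℓ ^ j :=
            Finset.card_biUnion_le_card_mul _ _ _ (fun η hη => (hg η (hsK hη)).2.1)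
        _ ≤ ℓ * ℓ ^ j := Nat.mul_le_mul_right _ hscard
        _ = ℓ ^ (j + 1) := by ring
    · intro q hq
      obtain ⟨_, ⟨η, rfl⟩, h2⟩ := hscov hq
      simp only [Set.mem_iUnion, exists_prop] at h2
      obtain ⟨hηs, hqball⟩ := h2
      have := (hg η (hsK hηs)).2.2 ⟨hqball, hq.2⟩
      simp only [Set.mem_iUnion, exists_prop] at this ⊢
      obtain ⟨μ, hμ, hqμ⟩ := this
      refine ⟨μ, Finset.mem_biUnion.mpr ⟨η, hηs, hμ⟩, ?_⟩
      rwa [show r / 2 / 2 ^ j = r / 2 ^ (j + 1) by rw [div_div, ← pow_succ']] at hqμ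


/-- Proposition 5.3, (i) ⇔ (ii): if the attractor `(K,ρ)` is doubling,

then condition `(S_b)` is equivalent to condition `(S_b')`. -/
theorem condS_iff_condS' {X M : Type*} [MetricSpace M] [CompleteSpace M]
    (R : RootedGraph X) (Φ : X → Set M)
    (hvert : R.Vertical) (hΦ : R.IsIndexMap Φ)
    (b δ₀ : ℝ) (hb : 0 < b) (hδ₀ : 0 ≤ δ₀)
    (hexp : R.ExpType Φ b δ₀)
    (hdbl : ∃ ℓ : ℕ, ∀ ξ ∈ R.attractor Φ, ∀ r : ℝ, ∃ s : Finset M,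
      ↑s ⊆ R.attractor Φ ∧ s.card ≤ ℓ ∧
        Metric.ball ξ r ∩ R.attractor Φ ⊆ ⋃ η ∈ s, Metric.ball η (r / 2)) :
    R.CondS Φ b ↔
      ∃ c₁ : ℝ, 0 < c₁ ∧ ∃ ℓ₁ : ℕ, ∀ (n : ℕ), ∀ ξ ∈ R.attractor Φ,
        Set.ncard {x | R.level x = n ∧
          ((Φ x ∩ R.attractor Φ) ∩ Metric.ball ξ (c₁ * Real.exp (-b * n))).Nonempty} ≤ ℓ₁ := by
  classical
  constructor
  · intro h
    obtain ⟨ℓ, hℓ⟩ := h 3 (by norm_num)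
    refine ⟨1, one_pos, ℓ, fun n ξ hξ => hℓ n _ ?_⟩
    have he : (0:ℝ) < Real.exp (-b * n) := Real.exp_pos _
    calc EMetric.diam (Metric.ball ξ (1 * Real.exp (-b * n)))
        ≤ 2 * ENNReal.ofReal (1 * Real.exp (-b * n)) := by
          rw [← Metric.emetric_ball]; exact EMetric.diam_ball
      _ = ENNReal.ofReal (2 * Real.exp (-b * n)) := by
          rw [ENNReal.ofReal_mul (by norm_num : (0:ℝ) ≤ 2)]
          norm_num
      _ < ENNReal.ofReal (3 * Real.exp (-b * n)) := by
          rw [ENNReal.ofReal_lt_ofReal_iff (by positivity)]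
          nlinarith
  · rintro ⟨c₁, hc₁, ℓ₁, hℓ₁⟩
    obtain ⟨ℓ, hℓ⟩ := hdbl
    intro c hc
    obtain ⟨j, hj⟩ := pow_unbounded_of_one_lt (R := ℝ) (c / c₁) (by norm_num : (1:ℝ) < 2)
    refine ⟨ℓ ^ j * ℓ₁, fun n F hF => ?_⟩
    set K := R.attractor Φ with hK
    set e := Real.exp (-b * n) with hedef
    have he : (0:ℝ) < e := Real.exp_pos _
    set S := {x | R.level x = n ∧ ((Φ x ∩ K) ∩ F).Nonempty} with hSdef
    rcases Set.eq_empty_or_nonempty S with hS | hS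
    · simp [hS]
    obtain ⟨x₀, hx₀⟩ := hS
    obtain ⟨q₀, hq₀⟩ := hx₀.2
    have hq₀K : q₀ ∈ K := hq₀.1.2
    obtain ⟨s, hsK, hscard, hscov⟩ := cover_iter hℓ j q₀ hq₀K (c * e)
    -- each small ball is inside a c₁-ball
    have hrad : c * e / 2 ^ j ≤ c₁ * e := by
      rw [div_le_iff₀ (by positivity)]
      have h2 : c < 2 ^ j * c₁ := (div_lt_iff₀ hc₁).mp hj
      nlinarith [mul_le_mul_of_nonneg_right h2.le he.le]
    -- S is contained in the union of the Sη
    have hsub : S ⊆ ⋃ η ∈ s, {x | R.level x = n ∧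
        ((Φ x ∩ K) ∩ Metric.ball η (c₁ * e)).Nonempty} := by
      rintro x ⟨hxl, q, hq⟩
      have hqball : q ∈ Metric.ball q₀ (c * e) := by
        rw [Metric.mem_ball, ← edist_lt_ofReal]
        calc edist q q₀ ≤ EMetric.diam F := EMetric.edist_le_diam_of_mem hq.2 hq₀.2
          _ < ENNReal.ofReal (c * e) := hF
      obtain ⟨_, ⟨η, rfl⟩, h2⟩ := hscov ⟨hqball, hq.1.2⟩
      simp only [Set.mem_iUnion, exists_prop] at h2
      obtain ⟨hηs, hqη⟩ := h2
      refine Set.mem_biUnion hηs ⟨hxl, q, hq.1, ?_⟩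
      exact Metric.ball_subset_ball hrad hqη
    -- finiteness and counting
    have hfin : ∀ η : M, {x | R.level x = n ∧
        ((Φ x ∩ K) ∩ Metric.ball η (c₁ * e)).Nonempty}.Finite :=
      fun η => (level_set_finite R n).subset (fun x hx => hx.1)
    have hfinS : S.Finite := (level_set_finite R n).subset (fun x hx => hx.1)
    set T : M → Finset X := fun η => (hfin η).toFinset with hT
    have hsub' : S ⊆ ↑(s.biUnion T) := by
      intro x hx
      obtain ⟨η, hηs, hxη⟩ := Set.mem_iUnion₂.mp (hsub hx)
      simp only [Finset.coe_biUnion, Set.mem_iUnion]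
      exact ⟨η, hηs, by simpa [hT] using hxη⟩
    calc S.ncard ≤ (s.biUnion T).card := by
          rw [← Set.ncard_coe_finset]
          exact Set.ncard_le_ncard hsub' (s.biUnion T).finite_toSet
      _ ≤ s.card * ℓ₁ := Finset.card_biUnion_le_card_mul _ _ _ (fun η hη => by
          show (hfin η).toFinset.card ≤ ℓ₁
          rw [← Set.ncard_eq_toFinset_card _ (hfin η)]
          exact hℓ₁ n η (hsK hη) )
      _ ≤ ℓ ^ j * ℓ₁ := Nat.mul_le_mul_right _ hscard
end
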